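/- Let S₂ : ℝ → ℂ be continuous with |S₂| = 1 and S₂(-θ) = conj(S₂(θ)), and suppose S₂ extends analytically to the strip S(-κ,κ) without zeros there, normalized by S₂(0) = ε with ε = ±1. Write S₂(ζ) = ε e^{2iδ(ζ)} with δ analytic on S(-κ,κ), δ(0) = 0. For n ≥ 2 define Y_n(θ₁,...,θ_n) := ∏_{1≤k<l≤n} ε e^{iδ(θ_k - θ_l)}. Then the multiplication operator by Y_n is a unitary on L²(ℝⁿ) intertwining the S₂-representation D_n of S_n with the representation D_n^ε built from the constant scattering function ε: D_n^ε(π) Y_n = Y_n D_n(π) for all π ∈ S_n. In particular Y_n maps the S₂-symmetric subspace of L²(ℝⁿ) unitarily onto the totally symmetric (ε = +1) or totally antisymmetric (ε = -1) subspace. -/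

import Mathlib

open MeasureTheory Complex

/-- The `n`-particle `L²` space over `ℝⁿ`. -/
noncomputable abbrev L2n (n : ℕ) :=
  MeasureTheory.Lp ℂ 2 (MeasureTheory.volume : MeasureTheory.Measure (Fin n → ℝ))

/-- The defining almost-everywhere action of the operator `D_n(τ_k)` on `L²(ℝⁿ)` for a
scattering function `S` (evaluated on the reals): `(D_n(τ_k) f)(θ) = S(θ_{k+1} - θ_k) ·
f(θ₁,…,θ_{k+1},θ_k,…,θ_n)`. -/
def IsDnGeneratorC {n : ℕ} (S : ℂ → ℂ) (k : ℕ) (hk : k + 1 < n)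
    (D : L2n n →L[ℂ] L2n n) : Prop :=
  ∀ f : L2n n,
    ∀ᵐ θ ∂(volume : Measure (Fin n → ℝ)),
      D f θ = S (((θ ⟨k + 1, hk⟩ - θ ⟨k, Nat.lt_of_succ_lt hk⟩ : ℝ)) : ℂ) *
        f (fun i => θ (Equiv.swap (⟨k, Nat.lt_of_succ_lt hk⟩ : Fin n) ⟨k + 1, hk⟩ i))

/-- with `S₂ = ε e^{2iδ}` analytic and nonvanishing on `S(-κ,κ)`, `δ(0) = 0`,
`ε = ±1`, the multiplication operator by `Y_n(θ) = ∏_{k<l} ε e^{iδ(θ_k-θ_l)}` is a unitary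
on `L²(ℝⁿ)` intertwining the `S₂`-representation `D_n` of the symmetric group with the
representation `D_n^ε` built from the constant scattering function `ε`; in particular it
maps the `S₂`-symmetric subspace unitarily onto the totally symmetric (`ε = +1`) or
totally antisymmetric (`ε = -1`) subspace. -/
theorem statement18 {n : ℕ} (κ : ℝ) (hκ : 0 < κ)
    (S₂ : ℂ → ℂ) (ε : ℂ) (hε : ε = 1 ∨ ε = -1)
    (hS_an : DifferentiableOn ℂ S₂ {ζ : ℂ | -κ < ζ.im ∧ ζ.im < κ})
    (hS_ne : ∀ ζ : ℂ, -κ < ζ.im → ζ.im < κ → S₂ ζ ≠ 0)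
    (hS_mod : ∀ θ : ℝ, ‖S₂ (θ : ℂ)‖ = 1)
    (hS_herm : ∀ θ : ℝ, S₂ (-(θ : ℂ)) = (starRingEnd ℂ) (S₂ (θ : ℂ)))
    (hS0 : S₂ 0 = ε)
    (δ : ℂ → ℂ)
    (hδ_an : DifferentiableOn ℂ δ {ζ : ℂ | -κ < ζ.im ∧ ζ.im < κ})
    (hδ0 : δ 0 = 0)
    (hδS : ∀ ζ : ℂ, -κ < ζ.im → ζ.im < κ →
      S₂ ζ = ε * Complex.exp (2 * Complex.I * δ ζ))
    (Y : L2n n →L[ℂ] L2n n)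
    (hY : ∀ f : L2n n, ∀ᵐ θ ∂(volume : Measure (Fin n → ℝ)),
      Y f θ =
        (∏ p ∈ Finset.univ.filter (fun p : Fin n × Fin n => p.1 < p.2),
          ε * Complex.exp (Complex.I * δ (((θ p.1 - θ p.2 : ℝ)) : ℂ))) * f θ)
    (ρ ρε : Equiv.Perm (Fin n) →* (L2n n ≃ₗᵢ[ℂ] L2n n))
    (hρ : ∀ (k : ℕ) (hk : k + 1 < n),
      IsDnGeneratorC S₂ k hk
        ((ρ (Equiv.swap (⟨k, Nat.lt_of_succ_lt hk⟩ : Fin n)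
            ⟨k + 1, hk⟩)).toLinearIsometry.toContinuousLinearMap))
    (hρε : ∀ (k : ℕ) (hk : k + 1 < n),
      IsDnGeneratorC (fun _ => ε) k hk
        ((ρε (Equiv.swap (⟨k, Nat.lt_of_succ_lt hk⟩ : Fin n)
            ⟨k + 1, hk⟩)).toLinearIsometry.toContinuousLinearMap)) :
    (∃ Yu : L2n n ≃ₗᵢ[ℂ] L2n n, ∀ f, Yu f = Y f) ∧
    (∀ (π : Equiv.Perm (Fin n)) (f : L2n n), ρε π (Y f) = Y (ρ π f)) ∧
    (∀ f : L2n n, (∀ π, ρ π f = f) → ∀ π, ρε π (Y f) = Y f) ∧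
    (∀ g : L2n n, (∀ π, ρε π g = g) →
      ∃ f : L2n n, (∀ π, ρ π f = f) ∧ Y f = g) := by
  classical
  have hε2 : ε * ε = 1 := by rcases hε with h | h <;> simp [h]
  have hεnorm : ‖ε‖ = 1 := by rcases hε with h | h <;> simp [h]
  have hmem1 : ∀ t : ℝ, -κ < ((t : ℂ)).im := fun t => by simp; linarith
  have hmem2 : ∀ t : ℝ, ((t : ℂ)).im < κ := fun t => by simp [hκ]
  have hδ_cont : Continuous fun t : ℝ => δ (t : ℂ) :=
    hδ_an.continuousOn.comp_continuous Complex.continuous_ofReal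
      (fun t => ⟨hmem1 t, hmem2 t⟩)
  have hδ_im : ∀ t : ℝ, (δ (t : ℂ)).im = 0 := by
    intro t
    have h1 := hδS (t : ℂ) (hmem1 t) (hmem2 t)
    have h2 := hS_mod t
    rw [h1, norm_mul, hεnorm, one_mul, Complex.norm_exp] at h2
    have h3 : (2 * Complex.I * δ (t : ℂ)).re = -2 * (δ (t : ℂ)).im := by
      simp [Complex.mul_re, Complex.mul_im]
    rw [h3, Real.exp_eq_one_iff] at h2
    linarith
  -- S₂(t) S₂(-t) = 1 on the reals
  have hS_unit : ∀ t : ℝ,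
      Complex.exp (2 * Complex.I * δ (t : ℂ)) *
        Complex.exp (2 * Complex.I * δ (-(t : ℂ))) = 1 := by
    intro t
    have h1 := hδS (t : ℂ) (hmem1 t) (hmem2 t)
    have h2 := hδS (-(t : ℂ)) (by simp; linarith) (by simp [hκ])
    have h3 : S₂ (t : ℂ) * S₂ (-(t : ℂ)) = 1 := by
      rw [hS_herm t, Complex.mul_conj]
      norm_cast
      rw [Complex.normSq_eq_norm_sq, hS_mod t]; norm_num
    have h4 : ε * Complex.exp (2 * Complex.I * δ (t : ℂ)) *
        (ε * Complex.exp (2 * Complex.I * δ (-(t : ℂ)))) = 1 := by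
      rw [← h1, ← h2]; exact h3
    linear_combination h4 - Complex.exp (2 * Complex.I * δ (t : ℂ)) *
      Complex.exp (2 * Complex.I * δ (-(t : ℂ))) * hε2
  -- δ is odd on the reals, in the exponentiated sense
  have hu_sq : ∀ t : ℝ,
      Complex.exp (Complex.I * (δ (t : ℂ) + δ (-(t : ℂ)))) *
        Complex.exp (Complex.I * (δ (t : ℂ) + δ (-(t : ℂ)))) = 1 := by
    intro t
    have h := hS_unit t
    rw [← Complex.exp_add] at h ⊢
    rw [show Complex.I * (δ (t : ℂ) + δ (-(t : ℂ))) +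
        Complex.I * (δ (t : ℂ) + δ (-(t : ℂ))) =
        2 * Complex.I * δ (t : ℂ) + 2 * Complex.I * δ (-(t : ℂ)) by ring]
    exact h
  have hu_pm : ∀ t : ℝ,
      Complex.exp (Complex.I * (δ (t : ℂ) + δ (-(t : ℂ)))) = 1 ∨
      Complex.exp (Complex.I * (δ (t : ℂ) + δ (-(t : ℂ)))) = -1 :=
    fun t => mul_self_eq_one_iff.mp (hu_sq t)
  have hu_cont : Continuous fun t : ℝ =>
      Complex.exp (Complex.I * (δ (t : ℂ) + δ (-(t : ℂ)))) := by
    apply Complex.continuous_exp.comp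
    apply continuous_const.mul
    refine hδ_cont.add ?_
    have h : (fun t : ℝ => δ (-(t : ℂ))) = fun t : ℝ => δ (((-t : ℝ)) : ℂ) := by
      funext t; rw [Complex.ofReal_neg]
    rw [h]
    exact hδ_cont.comp continuous_neg
  have hu0 : Complex.exp (Complex.I * (δ ((0 : ℝ) : ℂ) + δ (-((0 : ℝ) : ℂ)))) = 1 := by
    norm_num [hδ0]
  have hu_one : ∀ t : ℝ,
      Complex.exp (Complex.I * (δ (t : ℂ) + δ (-(t : ℂ)))) = 1 := by
    intro t
    by_contra hne
    have ht := (hu_pm t).resolve_left hne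
    have hg : ContinuousOn
        (fun s : ℝ => (Complex.exp (Complex.I * (δ (s : ℂ) + δ (-(s : ℂ))))).re)
        (Set.uIcc 0 t) := (Complex.continuous_re.comp hu_cont).continuousOn
    have h0mem : (0 : ℝ) ∈ Set.uIcc
        ((Complex.exp (Complex.I * (δ ((0:ℝ) : ℂ) + δ (-((0:ℝ) : ℂ))))).re)
        ((Complex.exp (Complex.I * (δ (t : ℂ) + δ (-(t : ℂ))))).re) := by
      rw [hu0, ht]; norm_num [Set.mem_uIcc]
    obtain ⟨s, -, hs⟩ := intermediate_value_uIcc hg h0mem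
    rcases hu_pm s with h | h <;> simp [h] at hs
  have hodd : ∀ t : ℝ,
      Complex.exp (Complex.I * δ (-(t : ℂ))) * Complex.exp (Complex.I * δ (t : ℂ)) = 1 := by
    intro t
    rw [← Complex.exp_add,
      show Complex.I * δ (-(t : ℂ)) + Complex.I * δ (t : ℂ) =
        Complex.I * (δ (t : ℂ) + δ (-(t : ℂ))) by ring]
    exact hu_one t
  -- the multiplier function
  set Φ : (Fin n → ℝ) → ℂ := fun θ =>
    ∏ p ∈ Finset.univ.filter (fun p : Fin n × Fin n => p.1 < p.2),
      ε * Complex.exp (Complex.I * δ (((θ p.1 - θ p.2 : ℝ)) : ℂ)) with hΦ_def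
  have hYΦ : ∀ f : L2n n, ∀ᵐ θ ∂(volume : Measure (Fin n → ℝ)),
      Y f θ = Φ θ * f θ := by
    intro f
    filter_upwards [hY f] with θ h
    rw [h]
  have hΦ_cont : Continuous Φ := by
    rw [hΦ_def]
    apply continuous_finset_prod
    intro p _
    exact continuous_const.mul (Complex.continuous_exp.comp (continuous_const.mul
      (hδ_cont.comp ((continuous_apply p.1).sub (continuous_apply p.2)))))
  have hfac_norm : ∀ x : ℝ, ‖ε * Complex.exp (Complex.I * δ (x : ℂ))‖ = 1 := by
    intro x
    rw [norm_mul, hεnorm, one_mul, Complex.norm_exp]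
    have h : (Complex.I * δ (x : ℂ)).re = -(δ (x : ℂ)).im := by
      simp [Complex.mul_re]
    rw [h, hδ_im, neg_zero, Real.exp_zero]
  have hΦ_norm : ∀ θ, ‖Φ θ‖ = 1 := by
    intro θ
    rw [hΦ_def]
    rw [norm_prod]
    exact Finset.prod_eq_one fun p _ => hfac_norm _
  -- Y is norm preserving
  have hnorm : ∀ f : L2n n, ‖Y f‖ = ‖f‖ := by
    intro f
    rw [Lp.norm_def, Lp.norm_def]
    congr 1
    refine (eLpNorm_congr_ae (hYΦ f)).trans ?_
    apply eLpNorm_congr_norm_ae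
    filter_upwards with θ
    rw [norm_mul, hΦ_norm, one_mul]
  -- Y is surjective
  have hsurj : ∀ g : L2n n, ∃ f : L2n n, Y f = g := by
    intro g
    have hψc : Continuous fun θ => (starRingEnd ℂ) (Φ θ) := by
      exact continuous_star.comp hΦ_cont
    have hmem : MemLp (fun θ => (starRingEnd ℂ) (Φ θ) * g θ) 2
        (volume : Measure (Fin n → ℝ)) := by
      constructor
      · exact hψc.aestronglyMeasurable.mul (Lp.aestronglyMeasurable g)
      · rw [show eLpNorm (fun θ => (starRingEnd ℂ) (Φ θ) * g θ) 2 volume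
            = eLpNorm (⇑g) 2 volume from eLpNorm_congr_norm_ae (by
          filter_upwards with θ
          rw [norm_mul, RCLike.norm_conj, hΦ_norm, one_mul])]
        exact Lp.eLpNorm_lt_top g
    refine ⟨hmem.toLp _, ?_⟩
    apply Lp.ext
    filter_upwards [hYΦ (hmem.toLp _), hmem.coeFn_toLp] with θ e1 e2
    rw [e1, e2, ← mul_assoc]
    have h3 : Φ θ * (starRingEnd ℂ) (Φ θ) = 1 := by
      rw [Complex.mul_conj]
      norm_cast
      rw [Complex.normSq_eq_norm_sq, hΦ_norm]; norm_num
    rw [h3, one_mul]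
  -- package Y as a unitary
  let Yli : L2n n →ₗᵢ[ℂ] L2n n := ⟨Y.toLinearMap, hnorm⟩
  have hsurj' : Function.Surjective Yli := fun g => by
    obtain ⟨f, hf⟩ := hsurj g; exact ⟨f, hf⟩
  let Yu : L2n n ≃ₗᵢ[ℂ] L2n n := LinearIsometryEquiv.ofSurjective Yli hsurj'
  have hYu : ∀ f, Yu f = Y f := by
    intro f
    have := LinearIsometryEquiv.coe_ofSurjective Yli hsurj'
    exact congrFun this f
  have hinj : ∀ u v : L2n n, Y u = Y v → u = v := by
    intro u v h
    apply Yu.injective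
    rw [hYu, hYu, h]
  -- the generator computation
  have hgen : ∀ (k : ℕ) (hk : k + 1 < n) (f : L2n n),
      ρε (Equiv.swap (⟨k, Nat.lt_of_succ_lt hk⟩ : Fin n) ⟨k + 1, hk⟩) (Y f)
        = Y (ρ (Equiv.swap (⟨k, Nat.lt_of_succ_lt hk⟩ : Fin n) ⟨k + 1, hk⟩) f) := by
    intro k hk f
    set a : Fin n := ⟨k, Nat.lt_of_succ_lt hk⟩ with ha_def
    set b : Fin n := ⟨k + 1, hk⟩ with hb_def
    have hab : a < b := by
      rw [Fin.lt_def]; simp [ha_def, hb_def]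
    set σ := Equiv.swap a b with hσ_def
    have hσval : ∀ x : Fin n,
        ((σ x : Fin n) : ℕ) = if (x : ℕ) = k then k + 1
          else if (x : ℕ) = k + 1 then k else (x : ℕ) := by
      intro x
      rcases eq_or_ne x a with rfl | hxa
      · rw [hσ_def, Equiv.swap_apply_left]
        simp [ha_def, hb_def]
      · rcases eq_or_ne x b with rfl | hxb
        · rw [hσ_def, Equiv.swap_apply_right]
          simp [ha_def, hb_def]
        · rw [hσ_def, Equiv.swap_apply_of_ne_of_ne hxa hxb]
          have h1 : (x : ℕ) ≠ k := fun h => hxa (Fin.ext h)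
          have h2 : (x : ℕ) ≠ k + 1 := fun h => hxb (Fin.ext h)
          simp [h1, h2]
    have horder : ∀ p q : Fin n, p < q → ¬(p = a ∧ q = b) → σ p < σ q := by
      intro p q hpq hne
      have h1 := hσval p
      have h2 := hσval q
      have hpq' : (p : ℕ) < (q : ℕ) := hpq
      have hne' : ¬((p : ℕ) = k ∧ (q : ℕ) = k + 1) := by
        rintro ⟨e1, e2⟩
        exact hne ⟨Fin.ext e1, Fin.ext e2⟩
      rw [Fin.lt_def, h1, h2]
      split_ifs <;> omega
    -- the pointwise intertwining identity
    have key : ∀ θ : Fin n → ℝ,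
        ε * Φ (fun i => θ (σ i)) = Φ θ * S₂ (((θ b - θ a : ℝ)) : ℂ) := by
      intro θ
      have habP : (a, b) ∈ Finset.univ.filter (fun p : Fin n × Fin n => p.1 < p.2) := by
        simp [hab]
      have hsplit1 : Φ θ =
          (ε * Complex.exp (Complex.I * δ (((θ a - θ b : ℝ)) : ℂ))) *
            ∏ p ∈ (Finset.univ.filter (fun p : Fin n × Fin n => p.1 < p.2)).erase (a, b),
              ε * Complex.exp (Complex.I * δ (((θ p.1 - θ p.2 : ℝ)) : ℂ)) := by
        rw [hΦ_def]
        exact (Finset.mul_prod_erase _ _ habP).symm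
      have hsplit2 : Φ (fun i => θ (σ i)) =
          (ε * Complex.exp (Complex.I * δ (((θ b - θ a : ℝ)) : ℂ))) *
            ∏ p ∈ (Finset.univ.filter (fun p : Fin n × Fin n => p.1 < p.2)).erase (a, b),
              ε * Complex.exp (Complex.I * δ (((θ p.1 - θ p.2 : ℝ)) : ℂ)) := by
        simp only [hΦ_def]
        rw [← Finset.mul_prod_erase _
          (fun p : Fin n × Fin n =>
            ε * Complex.exp (Complex.I * δ (((θ (σ p.1) - θ (σ p.2) : ℝ)) : ℂ))) habP]
        congr 1
        · rw [hσ_def, Equiv.swap_apply_left, Equiv.swap_apply_right]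
        · refine Finset.prod_bij' (fun p _ => (σ p.1, σ p.2)) (fun p _ => (σ p.1, σ p.2))
            ?_ ?_ ?_ ?_ ?_
          · intro p hp
            rw [Finset.mem_erase, Finset.mem_filter] at hp ⊢
            obtain ⟨hpne, -, hplt⟩ := hp
            refine ⟨?_, Finset.mem_univ _, ?_⟩
            · intro hc
              have h1 : σ p.1 = a := congrArg Prod.fst hc
              have h2 : σ p.2 = b := congrArg Prod.snd hc
              have h1' : p.1 = b := by
                have := congrArg σ h1
                rwa [hσ_def, Equiv.swap_apply_self, Equiv.swap_apply_left] at this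
              have h2' : p.2 = a := by
                have := congrArg σ h2
                rwa [hσ_def, Equiv.swap_apply_self, Equiv.swap_apply_right] at this
              rw [h1', h2'] at hplt
              exact absurd hplt (lt_asymm hab)
            · exact horder _ _ hplt fun ⟨e1, e2⟩ => hpne (Prod.ext e1 e2)
          · intro p hp
            rw [Finset.mem_erase, Finset.mem_filter] at hp ⊢
            obtain ⟨hpne, -, hplt⟩ := hp
            refine ⟨?_, Finset.mem_univ _, ?_⟩
            · intro hc
              have h1 : σ p.1 = a := congrArg Prod.fst hc
              have h2 : σ p.2 = b := congrArg Prod.snd hc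
              have h1' : p.1 = b := by
                have := congrArg σ h1
                rwa [hσ_def, Equiv.swap_apply_self, Equiv.swap_apply_left] at this
              have h2' : p.2 = a := by
                have := congrArg σ h2
                rwa [hσ_def, Equiv.swap_apply_self, Equiv.swap_apply_right] at this
              rw [h1', h2'] at hplt
              exact absurd hplt (lt_asymm hab)
            · exact horder _ _ hplt fun ⟨e1, e2⟩ => hpne (Prod.ext e1 e2)
          · intro p _
            simp [hσ_def]
          · intro p _
            simp [hσ_def]
          · intro p _
            simp [hσ_def]
      rw [hsplit1, hsplit2, hδS _ (hmem1 _) (hmem2 _)]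
      have h5 := hodd (θ b - θ a)
      have hcast : -(((θ b - θ a : ℝ)) : ℂ) = (((θ a - θ b : ℝ)) : ℂ) := by
        push_cast; ring
      rw [hcast] at h5
      have hsq : Complex.exp (2 * Complex.I * δ (((θ b - θ a : ℝ)) : ℂ)) =
          Complex.exp (Complex.I * δ (((θ b - θ a : ℝ)) : ℂ)) *
          Complex.exp (Complex.I * δ (((θ b - θ a : ℝ)) : ℂ)) := by
        rw [← Complex.exp_add]; congr 1; ring
      rw [hsq]
      linear_combination (-(ε * ε * Complex.exp (Complex.I * δ (((θ b - θ a : ℝ)) : ℂ)) *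
        ∏ p ∈ (Finset.univ.filter (fun p : Fin n × Fin n => p.1 < p.2)).erase (a, b),
          ε * Complex.exp (Complex.I * δ (((θ p.1 - θ p.2 : ℝ)) : ℂ)))) * h5
    -- measure preservation of the coordinate swap
    have hT : MeasurePreserving (fun θ : Fin n → ℝ => fun i => θ (σ i))
        (volume : Measure (Fin n → ℝ)) (volume : Measure (Fin n → ℝ)) := by
      have h := MeasureTheory.volume_measurePreserving_piCongrLeft (fun _ : Fin n => ℝ) σ.symm
      have heq : ⇑(MeasurableEquiv.piCongrLeft (fun _ : Fin n => ℝ) σ.symm) =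
          fun θ : Fin n → ℝ => fun i => θ (σ i) := by
        funext θ i
        have h2 := MeasurableEquiv.piCongrLeft_apply_apply (β := fun _ : Fin n => ℝ)
          σ.symm θ (σ i)
        rwa [Equiv.symm_apply_apply] at h2
      rwa [heq] at h
    have h1 := hρε k hk (Y f)
    have h4 := hρ k hk f
    have h3 := hYΦ (ρ σ f)
    have h2 := hT.quasiMeasurePreserving.ae_eq (hYΦ f)
    apply Lp.ext
    filter_upwards [h1, h2, h3, h4] with θ e1 e2 e3 e4
    simp only [Function.comp_apply] at e2
    have ec1 : ((ρε σ).toLinearIsometry.toContinuousLinearMap) (Y f) = ρε σ (Y f) := rfl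
    have ec2 : ((ρ σ).toLinearIsometry.toContinuousLinearMap) f = ρ σ f := rfl
    rw [ec1] at e1
    rw [ec2] at e4
    calc (ρε σ (Y f) : (Fin n → ℝ) → ℂ) θ
        = ε * (Y f) (fun i => θ (σ i)) := e1
      _ = ε * (Φ (fun i => θ (σ i)) * f (fun i => θ (σ i))) := by rw [e2]
      _ = (ε * Φ (fun i => θ (σ i))) * f (fun i => θ (σ i)) := by ring
      _ = (Φ θ * S₂ (((θ b - θ a : ℝ)) : ℂ)) * f (fun i => θ (σ i)) := by rw [key θ]
      _ = Φ θ * (S₂ (((θ b - θ a : ℝ)) : ℂ) * f (fun i => θ (σ i))) := by ring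
      _ = Φ θ * (ρ σ f) θ := by rw [← e4]
      _ = (Y (ρ σ f) : (Fin n → ℝ) → ℂ) θ := e3.symm
  -- intertwining for all permutations, by generation
  have hcomm : ∀ (π : Equiv.Perm (Fin n)) (f : L2n n), ρε π (Y f) = Y (ρ π f) := by
    cases n with
    | zero =>
      intro π f
      have hπ : π = 1 := Equiv.ext fun i => i.elim0
      subst hπ
      simp
    | succ m =>
      intro π
      have hπ : π ∈ Submonoid.closure
          (Set.range fun i : Fin m => Equiv.swap i.castSucc i.succ) := by
        rw [Equiv.Perm.mclosure_swap_castSucc_succ]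
        trivial
      induction hπ using Submonoid.closure_induction with
      | mem x hx =>
        obtain ⟨i, rfl⟩ := hx
        intro f
        have hk : (i : ℕ) + 1 < m + 1 := Nat.succ_lt_succ i.isLt
        have hc : Equiv.swap i.castSucc i.succ =
            Equiv.swap (⟨(i : ℕ), Nat.lt_of_succ_lt hk⟩ : Fin (m + 1)) ⟨(i : ℕ) + 1, hk⟩ := by
          congr 1
        show ρε (Equiv.swap i.castSucc i.succ) (Y f) = Y (ρ (Equiv.swap i.castSucc i.succ) f)
        rw [hc]
        exact hgen (i : ℕ) hk f
      | one =>
        intro f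
        simp
      | mul x y hx hy ihx ihy =>
        intro f
        rw [map_mul, map_mul]
        simp only [LinearIsometryEquiv.coe_mul, Function.comp_apply]
        rw [ihy, ihx]
  refine ⟨⟨Yu, hYu⟩, hcomm, ?_, ?_⟩
  · intro f hf π
    rw [hcomm π f, hf π]
  · intro g hg
    obtain ⟨f, hf⟩ := hsurj g
    refine ⟨f, ?_, hf⟩
    intro π
    apply hinj
    rw [← hcomm π f, hf, hg π]
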